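/- Let B be a discrete valuation ring with uniformizer π, N ≥ 0, and 0 ≤ a ≤ N. Then C = B[T₀,…,T_N]/(T₀⋯T_a − π) is an integral domain. -/

import Mathlib

set_option synthInstance.maxHeartbeats 1000000
set_option maxHeartbeats 1000000

open MvPolynomial

lemma primeX {R : Type*} [CommRing R] [IsDomain R] {σ : Type*} (i : σ) :
    Prime (X i : MvPolynomial σ R) := by
  classical
  have h := (MvPolynomial.prime_rename_iff ({i} : Set σ)
      (p := (X ⟨i, rfl⟩ : MvPolynomial ({i} : Set σ) R))).mpr ?_
  · simpa using h
  · rw [← MulEquiv.prime_iff (((renameEquiv R (Equiv.equivPUnit.{_,1} ({i} : Set σ))).trans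
      (pUnitAlgEquiv R)).toMulEquiv)]
    simpa using Polynomial.prime_X

lemma lin_irred {A : Type*} [CommRing A] [IsDomain A] (g c : A) (hg : g ≠ 0)
    (hrel : IsRelPrime g c) :
    Irreducible (Polynomial.C g * Polynomial.X - Polynomial.C c) := by
  set f : Polynomial A := Polynomial.C g * Polynomial.X - Polynomial.C c with hf
  have hdeg : f.degree = 1 := by
    have h1 : (Polynomial.C g * Polynomial.X : Polynomial A).degree = 1 := by
      simpa using Polynomial.degree_C_mul_X hg
    rw [hf, sub_eq_add_neg]
    rw [Polynomial.degree_add_eq_left_of_degree_lt]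
    · exact h1
    · rw [h1, Polynomial.degree_neg]
      exact lt_of_le_of_lt (Polynomial.degree_C_le) (by norm_num)
  have hndeg : f.natDegree = 1 := Polynomial.natDegree_eq_of_degree_eq_some hdeg
  constructor
  · intro hu
    have := Polynomial.natDegree_eq_zero_of_isUnit hu
    omega
  · intro p q hpq
    have hfne : f ≠ 0 := fun h => by simp [h] at hdeg
    have hpne : p ≠ 0 := fun h => hfne (by simp [hpq, h])
    have hqne : q ≠ 0 := fun h => hfne (by simp [hpq, h])
    have hadd : p.natDegree + q.natDegree = 1 := by
      rw [← Polynomial.natDegree_mul hpne hqne, ← hpq, hndeg]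
    -- one of the factors is a constant
    have key : ∀ p q : Polynomial A, f = p * q → q.natDegree = 0 → IsUnit q := by
      intro p q hpq hq0
      obtain ⟨d, hd⟩ := Polynomial.natDegree_eq_zero.mp hq0
      have h1 : g = p.coeff 1 * d := by
        have := congrArg (fun r : Polynomial A => r.coeff 1) hpq
        simpa [hf, ← hd, Polynomial.coeff_mul_C] using this
      have h0 : -c = p.coeff 0 * d := by
        have := congrArg (fun r : Polynomial A => r.coeff 0) hpq
        simpa [hf, ← hd, Polynomial.coeff_mul_C] using this
      have hdg : d ∣ g := ⟨p.coeff 1, by rw [h1, mul_comm]⟩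
      have hdc : d ∣ c := by
        have : d ∣ -c := ⟨p.coeff 0, by rw [h0, mul_comm]⟩
        exact (dvd_neg).mp this
      rw [← hd]
      exact Polynomial.isUnit_C.mpr (hrel hdg hdc)
    rcases Nat.eq_zero_or_pos q.natDegree with hq | hq
    · exact Or.inr (key p q hpq hq)
    · have hp0 : p.natDegree = 0 := by omega
      exact Or.inl (key q p (by rw [hpq, mul_comm]) hp0)

/-- For a discrete valuation ring `B` with uniformizer `π`,
`C = B[T₀,…,T_N]/(T₀⋯T_a − π)` is an integral domain. -/
theorem stmt6 (B : Type*) [CommRing B] [IsDomain B] [IsDiscreteValuationRing B]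
    (π : B) (hπ : Irreducible π) (N a : ℕ) (ha : a ≤ N) :
    IsDomain (MvPolynomial (Fin (N + 1)) B ⧸
      Ideal.span
        {(∏ i ∈ Finset.univ.filter (fun i : Fin (N + 1) => (i : ℕ) ≤ a), X i) - C π}) := by
  set f : MvPolynomial (Fin (N + 1)) B :=
    (∏ i ∈ Finset.univ.filter (fun i : Fin (N + 1) => (i : ℕ) ≤ a), X i) - C π with hfdef
  -- the image of f under finSuccEquiv
  set g : MvPolynomial (Fin N) B :=
    ∏ i : Fin N, (if ((i : ℕ) + 1 ≤ a) then X i else 1) with hgdef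
  have hprod : (∏ i ∈ Finset.univ.filter (fun i : Fin (N + 1) => (i : ℕ) ≤ a),
      (X i : MvPolynomial (Fin (N + 1)) B))
      = X 0 * ∏ i : Fin N, (if ((i : ℕ) + 1 ≤ a) then X i.succ else 1) := by
    rw [Finset.prod_filter, Fin.prod_univ_succ]
    simp [Fin.val_succ]
  have himg : (MvPolynomial.finSuccEquiv B N) f
      = Polynomial.C g * Polynomial.X - Polynomial.C (C π) := by
    rw [hfdef, map_sub, hprod, map_mul, finSuccEquiv_X_zero, map_prod]
    have : ∀ i : Fin N, (MvPolynomial.finSuccEquiv B N)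
        (if ((i : ℕ) + 1 ≤ a) then X i.succ else 1)
        = Polynomial.C (if ((i : ℕ) + 1 ≤ a) then X i else 1) := by
      intro i
      split
      · exact finSuccEquiv_X_succ
      · simp
    rw [Finset.prod_congr rfl (fun i _ => this i), ← map_prod, ← hgdef]
    have hC : (MvPolynomial.finSuccEquiv B N) (C π) = Polynomial.C (C π) := by
      simp [MvPolynomial.finSuccEquiv_apply]
    rw [hC, mul_comm]
  have hπ0 : π ≠ 0 := hπ.ne_zero
  have hg0 : g ≠ 0 := by
    rw [hgdef]
    apply Finset.prod_ne_zero_iff.mpr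
    intro i _
    split
    · exact MvPolynomial.X_ne_zero i
    · exact one_ne_zero
  have hrel : IsRelPrime g (C π : MvPolynomial (Fin N) B) := by
    rw [hgdef]
    apply IsRelPrime.prod_left
    intro i _
    split
    · refine (primeX i).irreducible.isRelPrime_iff_not_dvd.mpr ?_
      intro ⟨h, hh⟩
      have := congrArg MvPolynomial.constantCoeff hh
      simp at this
      exact hπ0 this
    · exact isRelPrime_one_left
  have hirr : Irreducible ((MvPolynomial.finSuccEquiv B N) f) := by
    rw [himg]; exact lin_irred g (C π) hg0 hrel
  have hprime : Prime f := by
    rw [← MulEquiv.prime_iff (MvPolynomial.finSuccEquiv B N).toMulEquiv]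
    exact (UniqueFactorizationMonoid.irreducible_iff_prime.mp hirr)
  haveI : (Ideal.span {f}).IsPrime :=
    (Ideal.span_singleton_prime hprime.ne_zero).mpr hprime
  exact Ideal.Quotient.isDomain _
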